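/- Let D be a digraph and let X ⊆ V(D) be such that the induced subdigraph D[X] is prime. Then the sets Ext_D(X), ⟨X⟩_D, and X_D(u) for u ∈ X are pairwise disjoint and their union is V(D) \ X. -/

import Mathlib

variable {V : Type*}

/-- `M` is a module of the simple graph `G`: every vertex outside `M` is adjacent
to every vertex of `M` or to no vertex of `M`. -/
def GraphModule (G : SimpleGraph V) (M : Set V) : Prop :=
  ∀ v ∉ M, (∀ x ∈ M, G.Adj v x) ∨ (∀ x ∈ M, ¬ G.Adj v x)

/-- `M` is a module of the digraph with arc relation `D`. -/
def DigraphModule (D : V → V → Prop) (M : Set V) : Prop :=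
  ∀ v ∉ M, ∀ x ∈ M, ∀ y ∈ M, (D v x ↔ D v y) ∧ (D x v ↔ D y v)

/-- The digraph `D` is an orientation of the simple graph `G`: there is an arc between
`x` and `y` (in exactly one direction) iff `x` and `y` are adjacent in `G`. -/
def IsOrientation (G : SimpleGraph V) (D : V → V → Prop) : Prop :=
  ∀ x y : V, ((D x y ∨ D y x) ↔ G.Adj x y) ∧ ¬ (D x y ∧ D y x)

/-- A graph is prime if it has at least 3 vertices and all its modules are trivial. -/
def GraphPrime [Fintype V] (G : SimpleGraph V) : Prop :=
  3 ≤ Fintype.card V ∧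
    ∀ M : Set V, GraphModule G M → M.Subsingleton ∨ M = Set.univ

/-- A digraph is prime if it has at least 3 vertices and all its modules are trivial. -/
def DigraphPrime [Fintype V] (D : V → V → Prop) : Prop :=
  3 ≤ Fintype.card V ∧
    ∀ M : Set V, DigraphModule D M → M.Subsingleton ∨ M = Set.univ

/-- A graph is primarily orientable if it admits a prime orientation. -/
def PrimarilyOrientable [Fintype V] (G : SimpleGraph V) : Prop :=
  ∃ D : V → V → Prop, IsOrientation G D ∧ DigraphPrime D

/-- `S` is a stable module (s-module) of `G`: a module of size at least 2 inducing no edges. -/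
def StableModule (G : SimpleGraph V) (S : Set V) : Prop :=
  GraphModule G S ∧ 2 ≤ S.ncard ∧ ∀ x ∈ S, ∀ y ∈ S, ¬ G.Adj x y

/-- The neighbourhood `N_G(M)` of a module `M`: the vertices outside `M` adjacent to
some (equivalently, every) vertex of `M`. -/
def modNbhd (G : SimpleGraph V) (M : Set V) : Set V :=
  {v | v ∉ M ∧ ∃ x ∈ M, G.Adj v x}

/-- `M` is a module of the subgraph of `G` induced on the vertex set `X`. -/
def ModuleOn (G : SimpleGraph V) (X M : Set V) : Prop :=
  M ⊆ X ∧ ∀ v ∈ X \ M, (∀ x ∈ M, G.Adj v x) ∨ (∀ x ∈ M, ¬ G.Adj v x)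

/-- `S` is an s-duo (stable module of size 2) of the subgraph of `G` induced on `X`. -/
def SduoOn (G : SimpleGraph V) (X S : Set V) : Prop :=
  ModuleOn G X S ∧ S.ncard = 2 ∧ ∀ x ∈ S, ∀ y ∈ S, ¬ G.Adj x y

/-- `S` is an s-duo of `G`. -/
def Sduo (G : SimpleGraph V) (S : Set V) : Prop :=
  SduoOn G Set.univ S

/-- `G` has no s-duo. -/
def SduoFree (G : SimpleGraph V) : Prop := ∀ S : Set V, ¬ Sduo G S

/-- `M` is a module of the subdigraph of `D` induced on the vertex set `X`. -/
def DModuleOn (D : V → V → Prop) (X M : Set V) : Prop :=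
  M ⊆ X ∧ ∀ v ∈ X \ M, ∀ x ∈ M, ∀ y ∈ M, (D v x ↔ D v y) ∧ (D x v ↔ D y v)

/-- The subdigraph of `D` induced on `X` is prime. -/
def DPrimeOn (D : V → V → Prop) (X : Set V) : Prop :=
  3 ≤ X.ncard ∧ ∀ M : Set V, DModuleOn D X M → M.Subsingleton ∨ M = X

/-- `Ext_D(X)`: vertices `v ∉ X` such that `D[X ∪ {v}]` is prime. -/
def ExtD (D : V → V → Prop) (X : Set V) : Set V :=
  {v | v ∉ X ∧ DPrimeOn D (X ∪ {v})}

/-- `⟨X⟩_D`: vertices `v ∉ X` such that `X` is a module of `D[X ∪ {v}]`. -/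
def InnD (D : V → V → Prop) (X : Set V) : Set V :=
  {v | v ∉ X ∧ DModuleOn D (X ∪ {v}) X}

/-- `X_D(u)`: vertices `v ∉ X` such that `{u, v}` is a module of `D[X ∪ {v}]`. -/
def AttD (D : V → V → Prop) (X : Set V) (u : V) : Set V :=
  {v | v ∉ X ∧ DModuleOn D (X ∪ {v}) ({u, v} : Set V)}



lemma dmod_restrict {D : V → V → Prop} {Y X M : Set V} (hXY : X ⊆ Y)
    (h : DModuleOn D Y M) : DModuleOn D X (M ∩ X) := by
  refine ⟨Set.inter_subset_right, fun w hw x hx y hy => ?_⟩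
  exact h.2 w ⟨hXY hw.1, fun hwM => hw.2 ⟨hwM, hw.1⟩⟩ x hx.1 y hy.1

/-- If `D[X]` is prime, the sets `Ext_D(X)`, `⟨X⟩_D` and `X_D(u)` for `u ∈ X` are
pairwise disjoint, and their union is `V(D) \\ X`. -/
theorem partition_of_complement [Fintype V] (D : V → V → Prop)
    (X : Set V) (hX : DPrimeOn D X) :
    Disjoint (ExtD D X) (InnD D X) ∧
    (∀ u ∈ X, Disjoint (ExtD D X) (AttD D X u)) ∧
    (∀ u ∈ X, Disjoint (InnD D X) (AttD D X u)) ∧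
    (∀ u ∈ X, ∀ u' ∈ X, u ≠ u' → Disjoint (AttD D X u) (AttD D X u')) ∧
    (ExtD D X ∪ InnD D X ∪ ⋃ u ∈ X, AttD D X u) = Xᶜ := by

  obtain ⟨hcard, hprime⟩ := hX
  have hXfin : X.Finite := Set.toFinite X
  -- X has two distinct elements different from any given u, etc.
  have hex2 : ∀ u : V, ∃ x ∈ X, x ≠ u := by
    intro u
    by_contra h
    push_neg at h
    have : X ⊆ {u} := fun x hx => h x hx
    have := Set.ncard_le_ncard this (Set.finite_singleton u)
    rw [Set.ncard_singleton] at this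
    omega
  refine ⟨?_, ?_, ?_, ?_, ?_⟩
  · -- Ext vs Inn
    rw [Set.disjoint_left]
    rintro v ⟨hv, h3, hpr⟩ ⟨-, hmod⟩
    rcases hpr X hmod with hs | he
    · have ⟨a, ha, hane⟩ := hex2 v
      have ⟨b, hb, hbna⟩ := hex2 a
      exact hbna (hs hb ha)
    · exact hv (he ▸ Set.mem_union_right X rfl)
  · -- Ext vs Att
    rintro u hu
    rw [Set.disjoint_left]
    rintro v ⟨hv, h3, hpr⟩ ⟨-, hmod⟩
    have huv : u ≠ v := fun h => hv (h ▸ hu)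
    rcases hpr _ hmod with hs | he
    · exact huv (hs (Set.mem_insert u {v}) (Set.mem_insert_iff.mpr (Or.inr rfl)))
    · obtain ⟨x, hx, hxu⟩ := hex2 u
      have hxv : x ≠ v := fun h => hv (h ▸ hx)
      have : x ∈ ({u, v} : Set V) := he ▸ Set.mem_union_left _ hx
      rcases this with h | h
      · exact hxu h
      · exact hxv h
  · -- Inn vs Att
    rintro u hu
    rw [Set.disjoint_left]
    rintro v ⟨hv, hI⟩ ⟨-, hA⟩
    have huv : u ≠ v := fun h => hv (h ▸ hu)
    -- X \ {u} is a module of D[X]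
    have hmod : DModuleOn D X (X \ {u}) := by
      refine ⟨Set.diff_subset, fun w hw x hx y hy => ?_⟩
      have hwu : w = u := by
        rcases hw with ⟨hwX, hw2⟩
        by_contra h
        exact hw2 ⟨hwX, h⟩
      subst hwu
      have hxv : x ≠ v := fun h => hv (h ▸ hx.1)
      have hyv : y ≠ v := fun h => hv (h ▸ hy.1)
      have hax := hA.2 x ⟨Set.mem_union_left _ hx.1, by
        rintro (h | h); exact hx.2 h; exact hxv h⟩ w (Set.mem_insert w {v})
        v (Set.mem_insert_iff.mpr (Or.inr rfl))
      have hay := hA.2 y ⟨Set.mem_union_left _ hy.1, by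
        rintro (h | h); exact hy.2 h; exact hyv h⟩ w (Set.mem_insert w {v})
        v (Set.mem_insert_iff.mpr (Or.inr rfl))
      have hi := hI.2 v ⟨Set.mem_union_right _ rfl, hv⟩ x hx.1 y hy.1
      exact ⟨⟨fun h => hay.2.mpr (hi.1.mp (hax.2.mp h)),
              fun h => hax.2.mpr (hi.1.mpr (hay.2.mp h))⟩,
             ⟨fun h => hay.1.mpr (hi.2.mp (hax.1.mp h)),
              fun h => hax.1.mpr (hi.2.mpr (hay.1.mp h))⟩⟩
    rcases hprime _ hmod with hs | he
    · have h1 : (X \ {u}).ncard + 1 = X.ncard :=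
        Set.ncard_diff_singleton_add_one hu hXfin
      have h2 : 1 < (X \ {u}).ncard := by omega
      obtain ⟨p, q, hp, hq, hpq⟩ := (Set.one_lt_ncard_iff hXfin.diff).mp h2
      exact hpq (hs hp hq)
    · have huu : u ∈ X \ {u} := by rw [he]; exact hu
      exact huu.2 rfl
  · -- Att u vs Att u'
    rintro u hu u' hu' huu'
    rw [Set.disjoint_left]
    rintro v ⟨hv, hA⟩ ⟨-, hA'⟩
    have huv : u ≠ v := fun h => hv (h ▸ hu)
    have hu'v : u' ≠ v := fun h => hv (h ▸ hu')
    have hmod : DModuleOn D X ({u, u'} : Set V) := by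
      refine ⟨by rintro x (rfl | rfl) <;> assumption, fun w hw x hx y hy => ?_⟩
      obtain ⟨hwX, hw2⟩ := hw
      have hwu : w ≠ u := fun h => hw2 (h ▸ Set.mem_insert u {u'})
      have hwu' : w ≠ u' := fun h => hw2 (h ▸ Set.mem_insert_iff.mpr (Or.inr rfl))
      have hwv : w ≠ v := fun h => hv (h ▸ hwX)
      have h1 := hA.2 w ⟨Set.mem_union_left _ hwX, by
        rintro (h | h); exact hwu h; exact hwv h⟩ u (Set.mem_insert u {v})
        v (Set.mem_insert_iff.mpr (Or.inr rfl))
      have h2 := hA'.2 w ⟨Set.mem_union_left _ hwX, by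
        rintro (h | h); exact hwu' h; exact hwv h⟩ u' (Set.mem_insert u' {v})
        v (Set.mem_insert_iff.mpr (Or.inr rfl))
      rcases hx with rfl | rfl <;> rcases hy with rfl | rfl
      · exact ⟨Iff.rfl, Iff.rfl⟩
      · exact ⟨h1.1.trans h2.1.symm, h1.2.trans h2.2.symm⟩
      · exact ⟨h2.1.trans h1.1.symm, h2.2.trans h1.2.symm⟩
      · exact ⟨Iff.rfl, Iff.rfl⟩
    rcases hprime _ hmod with hs | he
    · exact huu' (hs (Set.mem_insert u {u'}) (Set.mem_insert_iff.mpr (Or.inr rfl)))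
    · have : X.ncard = 2 := he ▸ Set.ncard_pair huu'
      omega
  · -- union equals complement
    ext v
    simp only [Set.mem_union, Set.mem_iUnion, Set.mem_compl_iff]
    constructor
    · rintro ((⟨hv, -⟩ | ⟨hv, -⟩) | ⟨u, hu, hv, -⟩) <;> exact hv
    · intro hv
      by_cases hp : DPrimeOn D (X ∪ {v})
      · exact Or.inl (Or.inl ⟨hv, hp⟩)
      · rw [DPrimeOn] at hp
        push_neg at hp
        have hc : 3 ≤ (X ∪ {v}).ncard :=
          le_trans hcard (Set.ncard_le_ncard Set.subset_union_left (Set.toFinite _))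
        obtain ⟨M, hM, hns, hne⟩ := hp hc
        have hrest : DModuleOn D X (M ∩ X) := dmod_restrict Set.subset_union_left hM
        rcases hprime _ hrest with hs | he
        · -- M = {u, v}
          have hvM : v ∈ M := by
            by_contra hvM
            have hMX : M ⊆ X := fun x hx => by
              rcases hM.1 hx with h | h
              · exact h
              · exact absurd (h ▸ hx) hvM
            exact Set.not_nontrivial_iff.mpr (fun a ha b hb => hs ⟨ha, hMX ha⟩ ⟨hb, hMX hb⟩) hns
          have hMne : (M ∩ X).Nonempty := by
            rcases hns with ⟨a, ha, b, hb, hab⟩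
            by_contra hemp
            rw [Set.not_nonempty_iff_eq_empty] at hemp
            have hMv : M ⊆ {v} := fun x hx => by
              rcases hM.1 hx with h | h
              · exact absurd (Set.mem_inter hx h) (hemp ▸ Set.notMem_empty x)
              · exact h
            exact hab ((hMv ha).trans (hMv hb).symm)
          obtain ⟨u, huM, huX⟩ := hMne
          have hMeq : M = {u, v} := by
            apply Set.eq_of_subset_of_subset
            · intro x hx
              rcases hM.1 hx with h | h
              · exact Or.inl (hs ⟨hx, h⟩ ⟨huM, huX⟩)
              · exact Or.inr h
            · rintro x (rfl | rfl); exact huM; exact hvM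
          exact Or.inr ⟨u, huX, hv, hMeq ▸ hM⟩
        · -- M = X, so v ∈ InnD
          have hXM : X ⊆ M := fun x hx => by
            have : x ∈ M ∩ X := by rw [he]; exact hx
            exact this.1
          have hvM : v ∉ M := by
            intro hvM
            apply hne
            apply Set.eq_of_subset_of_subset hM.1
            rintro x (hx | rfl); exacts [hXM hx, hvM]
          have hMX : M = X := by
            apply Set.eq_of_subset_of_subset _ hXM
            intro x hx
            rcases hM.1 hx with h | h
            · exact h
            · exact absurd (h ▸ hx) hvM
          exact Or.inl (Or.inr ⟨hv, hMX ▸ hM⟩)
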